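/- Let q ≥ 2 and 1 < s < q, and write s̄ = q - s. Suppose a positive integer b can be written as b = r + ∑_{j=k+1}^{∞} ε_j (q^j - 1), where r ∈ [[s̄^k]_q, [1^k 0]_q], each ε_j ∈ {0,1}, not all ε_j are 0, and ε_j = 0 for j sufficiently large. Then the largest index j ≥ k+1 with ε_j = 1 equals the largest j ∈ ℕ with q^j - 1 ≤ b. -/

import Mathlib

/-- if `b = r + ∑ ε_j (q^j - 1)` with
`r ∈ [[s̄^k]_q, [1^k 0]_q]`, `ε_j ∈ {0,1}` not all zero, supported on `j ≥ k+1`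
and vanishing for large `j`, then the largest `j` with `ε_j = 1` equals the
largest `j` with `q^j - 1 ≤ b`. -/
theorem stmt1 (q s k : ℕ) (hq : 2 ≤ q) (hs1 : 1 < s) (hsq : s < q)
    (b r : ℕ) (hb : 0 < b)
    (hr1 : (q - s) * (q ^ k - 1) / (q - 1) ≤ r)
    (hr2 : r ≤ ∑ i ∈ Finset.Icc 1 k, q ^ i)
    (ε : ℕ → ℕ) (hε01 : ∀ j, ε j ≤ 1)
    (hεlow : ∀ j ≤ k, ε j = 0)
    (N : ℕ) (hN : ∀ j ≥ N, ε j = 0)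
    (hne : ∃ j, ε j = 1)
    (hdec : b = r + ∑ j ∈ Finset.range N, ε j * (q ^ j - 1)) :
    ∃ J : ℕ, IsGreatest {j | ε j = 1} J ∧ IsGreatest {j | q ^ j - 1 ≤ b} J := by
  obtain ⟨j0, hj0⟩ := hne
  have hj0N : j0 < N := by
    by_contra h; push_neg at h; have := hN j0 h; omega
  set J := Nat.findGreatest (fun j => ε j = 1) N with hJ
  have hJmem : ε J = 1 := Nat.findGreatest_spec (P := fun j => ε j = 1) (le_of_lt hj0N) hj0
  have hJub : ∀ j, ε j = 1 → j ≤ J := by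
    intro j hj
    by_cases h : j ≤ N
    · exact Nat.le_findGreatest (P := fun j => ε j = 1) h hj
    · exfalso; push_neg at h; have := hN j h.le; omega
  have hkJ : k + 1 ≤ J := by
    by_contra h; push_neg at h
    have := hεlow J (by omega); omega
  have hJN : J < N := by
    by_contra h; push_neg at h; have := hN J h; omega
  have hlow : q ^ J - 1 ≤ b := by
    rw [hdec]
    have hle : ε J * (q ^ J - 1) ≤ ∑ j ∈ Finset.range N, ε j * (q ^ j - 1) :=
      Finset.single_le_sum (f := fun j => ε j * (q ^ j - 1)) (fun i _ => Nat.zero_le _) (Finset.mem_range.mpr hJN)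
    rw [hJmem, one_mul] at hle
    omega
  have hsum : ∑ j ∈ Finset.range N, ε j * (q ^ j - 1) ≤ ∑ j ∈ Finset.Ioc k J, q ^ j := by
    calc ∑ j ∈ Finset.range N, ε j * (q ^ j - 1)
        ≤ ∑ j ∈ Finset.range N, (if k + 1 ≤ j ∧ j ≤ J then q ^ j else 0) := by
          apply Finset.sum_le_sum
          intro j _
          by_cases hj : ε j = 1
          · have h1 := hJub j hj
            have h2 : k + 1 ≤ j := by
              by_contra h; push_neg at h; have := hεlow j (by omega); omega
            simp only [hj, one_mul, h1, h2, and_self, if_true]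
            omega
          · have hz : ε j = 0 := by have := hε01 j; omega
            simp [hz]
      _ ≤ ∑ j ∈ Finset.Ioc k J, q ^ j := by
          rw [← Finset.sum_filter]
          apply Finset.sum_le_sum_of_subset
          intro j hj
          simp only [Finset.mem_filter, Finset.mem_range] at hj
          simp only [Finset.mem_Ioc]; omega
  have hgeom : ∀ m : ℕ, ∑ i ∈ Finset.Icc 1 m, q ^ i ≤ q ^ (m + 1) - 2 := by
    intro m
    induction m with
    | zero => simp
    | succ n ih =>
      rw [Finset.sum_Icc_succ_top (by omega)]
      have h1 : q ^ (n + 1) * 2 ≤ q ^ (n + 1 + 1) := by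
        rw [pow_succ]
        exact Nat.mul_le_mul_left _ hq
      have h2 : q ≤ q ^ (n + 1) := Nat.le_self_pow (by omega) q
      omega
  have hupper : b ≤ q ^ (J + 1) - 2 := by
    rw [hdec]
    have hcomb : ∑ i ∈ Finset.Icc 1 k, q ^ i + ∑ j ∈ Finset.Ioc k J, q ^ j
        = ∑ i ∈ Finset.Icc 1 J, q ^ i := by
      have h := Finset.sum_Ioc_consecutive (fun i => q ^ i) (Nat.zero_le k)
        (by omega : k ≤ J)
      rw [← Finset.Icc_add_one_left_eq_Ioc (a := 0), ← Finset.Icc_add_one_left_eq_Ioc (a := 0)] at h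
      exact h
    calc r + ∑ j ∈ Finset.range N, ε j * (q ^ j - 1)
        ≤ ∑ i ∈ Finset.Icc 1 k, q ^ i + ∑ j ∈ Finset.Ioc k J, q ^ j :=
          Nat.add_le_add hr2 hsum
      _ = ∑ i ∈ Finset.Icc 1 J, q ^ i := hcomb
      _ ≤ q ^ (J + 1) - 2 := hgeom J
  refine ⟨J, ⟨hJmem, hJub⟩, ⟨hlow, ?_⟩⟩
  intro j hj
  simp only [Set.mem_setOf_eq] at hj
  by_contra h
  push_neg at h
  have h1 : q ^ (J + 1) ≤ q ^ j := Nat.pow_le_pow_right (by omega) h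
  have h2 : 2 ≤ q ^ (J + 1) := le_trans hq (Nat.le_self_pow (by omega) q)
  omega
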